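/- Let Q ∈ ℝ^{N×N} be a symmetric matrix with nonnegative off-diagonal entries Q_{ij} such that the quadratic form satisfies ξ^T Q ξ = ∑_{i<j} Q_{ij}(ξ_i − ξ_j)^2 for all ξ, and suppose the minimum cut condition holds: for every nonempty proper subset S ⊂ {1,...,N}, ∑_{i∈S, j∉S} Q_{ij} ≥ π_min·c for constants π_min, c > 0. Then for every ξ ∈ ℝ^N with π^T ξ = 0 (where π has positive entries and min_i π_i = π_min), ξ^T Q ξ ≥ (π_min·c / N²)·‖ξ‖². -/

import Mathlib

open Matrix

/-- For nonnegative terms, the sum of squares is at most the square of the sum. -/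
lemma aux_sum_sq_le_sq_sum {s : Finset ℕ} {g : ℕ → ℝ} (hg : ∀ k ∈ s, 0 ≤ g k) :
    ∑ k ∈ s, g k ^ 2 ≤ (∑ k ∈ s, g k) ^ 2 := by
  have h1 : ∑ k ∈ s, g k ^ 2 ≤ ∑ k ∈ s, g k * (∑ l ∈ s, g l) := by
    refine Finset.sum_le_sum fun k hk => ?_
    have : g k ≤ ∑ l ∈ s, g l := Finset.single_le_sum hg hk
    have := mul_le_mul_of_nonneg_left this (hg k hk)
    simpa [pow_two] using this
  calc ∑ k ∈ s, g k ^ 2 ≤ ∑ k ∈ s, g k * (∑ l ∈ s, g l) := h1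
    _ = (∑ k ∈ s, g k) ^ 2 := by rw [← Finset.sum_mul]; ring

theorem stmt_2 (N : ℕ) (hN : 0 < N)
    (Q : Matrix (Fin N) (Fin N) ℝ) (hQsymm : Q.IsSymm)
    (hQnonneg : ∀ i j, i ≠ j → 0 ≤ Q i j)
    (hform : ∀ ξ : Fin N → ℝ,
      ξ ⬝ᵥ Q.mulVec ξ =
        ∑ i, ∑ j ∈ Finset.univ.filter (fun j => i < j), Q i j * (ξ i - ξ j) ^ 2)
    (π : Fin N → ℝ) (hπ : ∀ i, 0 < π i)
    (πmin c : ℝ) (hc : 0 < c)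
    (hπmin : πmin = Finset.univ.inf' (Finset.univ_nonempty_iff.mpr (Fin.pos_iff_nonempty.mp hN)) π)
    (hcut : ∀ S : Finset (Fin N), S.Nonempty → S ≠ Finset.univ →
      πmin * c ≤ ∑ i ∈ S, ∑ j ∈ Sᶜ, Q i j) :
    ∀ ξ : Fin N → ℝ, ∑ i, π i * ξ i = 0 →
      (πmin * c / (N : ℝ) ^ 2) * ∑ i, (ξ i) ^ 2 ≤ ξ ⬝ᵥ Q.mulVec ξ := by
  intro ξ hbal
  -- πmin > 0
  have hπminpos : 0 < πmin := by
    rw [hπmin]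
    exact (Finset.lt_inf'_iff _).mpr fun i _ => hπ i
  have hP : 0 < πmin * c := mul_pos hπminpos hc
  -- sorting permutation
  set σ : Equiv.Perm (Fin N) := Tuple.sort ξ with hσdef
  have hmono : Monotone (ξ ∘ σ) := Tuple.monotone_sort ξ
  -- rank function
  set r : Fin N → ℕ := fun i => ((σ.symm i : Fin N) : ℕ) with hrdef
  have hrlt : ∀ i, r i < N := fun i => (σ.symm i).2
  have hrle : ∀ i, r i ≤ N - 1 := fun i => Nat.le_sub_one_of_lt (hrlt i)
  have hrinj : ∀ i j, r i = r j → i = j := by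
    intro i j h
    have : σ.symm i = σ.symm j := Fin.val_injective h
    exact σ.symm.injective this
  -- monotone extension f : ℕ → ℝ
  have hminlt : ∀ k : ℕ, min k (N - 1) < N := fun k => by omega
  set f : ℕ → ℝ := fun k => ξ (σ ⟨min k (N - 1), hminlt k⟩) with hfdef
  have hfmono : Monotone f := by
    intro a b hab
    exact hmono (by simp [Fin.le_def]; omega)
  have hξf : ∀ i, ξ i = f (r i) := by
    intro i
    have h1 : min (r i) (N - 1) = r i := min_eq_left (hrle i)
    show ξ i = ξ (σ ⟨min (r i) (N - 1), hminlt (r i)⟩)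
    congr 1
    have : (⟨min (r i) (N - 1), hminlt (r i)⟩ : Fin N) = σ.symm i := by
      apply Fin.val_injective; simp [h1, hrdef]; exact hrle i
    rw [this, Equiv.apply_symm_apply]
  -- gaps
  set g : ℕ → ℝ := fun k => f (k + 1) - f k with hgdef
  have hg0 : ∀ k, 0 ≤ g k := fun k => sub_nonneg.mpr (hfmono (Nat.le_succ k))
  have htel : ∀ a b : ℕ, a ≤ b → ∑ k ∈ Finset.Ico a b, g k = f b - f a := by
    intro a b hab
    rw [Finset.sum_Ico_eq_sub _ hab]
    rw [Finset.sum_range_sub (f := f), Finset.sum_range_sub (f := f)]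
    ring
  -- extremes
  set m : ℝ := f 0 with hmdef
  set M : ℝ := f (N - 1) with hMdef
  have hmle : ∀ i, m ≤ ξ i := fun i => by rw [hξf i]; exact hfmono (Nat.zero_le _)
  have hleM : ∀ i, ξ i ≤ M := fun i => by rw [hξf i]; exact hfmono (hrle i)
  have hm0 : m ≤ 0 := by
    by_contra h
    push_neg at h
    have : 0 < ∑ i, π i * ξ i := by
      apply Finset.sum_pos
      · intro i _
        exact mul_pos (hπ i) (lt_of_lt_of_le h (hmle i))
      · exact Finset.univ_nonempty_iff.mpr (Fin.pos_iff_nonempty.mp hN)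
    linarith
  have hM0 : 0 ≤ M := by
    by_contra h
    push_neg at h
    have : ∑ i, π i * ξ i < 0 := by
      apply Finset.sum_neg
      · intro i _
        exact mul_neg_of_pos_of_neg (hπ i) (lt_of_le_of_lt (hleM i) h)
      · exact Finset.univ_nonempty_iff.mpr (Fin.pos_iff_nonempty.mp hN)
    linarith
  -- (A) ∑ ξ² ≤ N (M-m)²
  have hA : ∑ i, (ξ i) ^ 2 ≤ (N : ℝ) * (M - m) ^ 2 := by
    have : ∀ i : Fin N, (ξ i) ^ 2 ≤ (M - m) ^ 2 := by
      intro i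
      apply sq_le_sq'
      · linarith [hmle i]
      · linarith [hleM i]
    calc ∑ i, (ξ i) ^ 2 ≤ ∑ _i : Fin N, (M - m) ^ 2 := Finset.sum_le_sum fun i _ => this i
      _ = (N : ℝ) * (M - m) ^ 2 := by simp [mul_comm]
  -- (B) (M-m)² ≤ N ∑ g²
  set G : ℝ := ∑ k ∈ Finset.range (N - 1), g k ^ 2 with hGdef
  have hG0 : 0 ≤ G := Finset.sum_nonneg fun k _ => sq_nonneg _
  have hB : (M - m) ^ 2 ≤ (N : ℝ) * G := by
    have h1 : M - m = ∑ k ∈ Finset.range (N - 1), g k := by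
      rw [Finset.sum_range_sub (f := f)]
    have h2 : (∑ k ∈ Finset.range (N - 1), g k) ^ 2 ≤
        ((N : ℝ) - 1) * G := by
      have := Finset.sum_mul_sq_le_sq_mul_sq (Finset.range (N - 1)) (fun _ => (1 : ℝ)) g
      simp only [one_mul, one_pow] at this
      calc (∑ k ∈ Finset.range (N - 1), g k) ^ 2
          ≤ (∑ _k ∈ Finset.range (N - 1), (1 : ℝ)) * G := this
        _ = ((N - 1 : ℕ) : ℝ) * G := by simp
        _ ≤ ((N : ℝ) - 1) * G := by
            apply mul_le_mul_of_nonneg_right _ hG0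
            have : (1 : ℝ) ≤ (N : ℝ) := by exact_mod_cast hN
            push_cast [Nat.cast_sub hN]
            linarith
    rw [h1]
    nlinarith [hG0]
  -- cuts
  set S : ℕ → Finset (Fin N) := fun k => Finset.univ.filter (fun i => r i ≤ k) with hSdef
  have hScut : ∀ k ∈ Finset.range (N - 1),
      πmin * c ≤ ∑ i ∈ S k, ∑ j ∈ (S k)ᶜ, Q i j := by
    intro k hk
    rw [Finset.mem_range] at hk
    apply hcut
    · refine ⟨σ ⟨0, hN⟩, ?_⟩
      simp only [hSdef, Finset.mem_filter, Finset.mem_univ, true_and]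
      show ((σ.symm (σ ⟨0, hN⟩) : Fin N) : ℕ) ≤ k
      rw [Equiv.symm_apply_apply]
      exact Nat.zero_le k
    · intro h
      have : σ ⟨N - 1, by omega⟩ ∈ S k := h ▸ Finset.mem_univ _
      simp only [hSdef, Finset.mem_filter, Finset.mem_univ, true_and] at this
      rw [hrdef] at this
      simp only [Equiv.symm_apply_apply] at this
      omega
  -- T i j
  set T : Fin N → Fin N → ℝ := fun i j => ∑ k ∈ Finset.Ico (r i) (r j), g k ^ 2 with hTdef
  have hT0 : ∀ i j, 0 ≤ T i j := fun i j => Finset.sum_nonneg fun k _ => sq_nonneg _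
  have hTzero : ∀ i j, r j ≤ r i → T i j = 0 := by
    intro i j h
    show ∑ k ∈ Finset.Ico (r i) (r j), g k ^ 2 = 0
    rw [Finset.Ico_eq_empty (not_lt.mpr h), Finset.sum_empty]
  have hTbound : ∀ i j, r i < r j → T i j ≤ (ξ i - ξ j) ^ 2 := by
    intro i j h
    have h1 : T i j ≤ (∑ k ∈ Finset.Ico (r i) (r j), g k) ^ 2 :=
      aux_sum_sq_le_sq_sum fun k _ => hg0 k
    rw [htel _ _ h.le] at h1
    rw [hξf i, hξf j]
    calc T i j ≤ (f (r j) - f (r i)) ^ 2 := h1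
      _ = (f (r i) - f (r j)) ^ 2 := by ring
  -- (C) equality: ∑_k g² cut = ∑∑ Q T
  have hC : ∑ k ∈ Finset.range (N - 1), g k ^ 2 * (∑ i ∈ S k, ∑ j ∈ (S k)ᶜ, Q i j)
      = ∑ i, ∑ j, Q i j * T i j := by
    have hcompl : ∀ k : ℕ, (S k)ᶜ = Finset.univ.filter (fun j => ¬ r j ≤ k) := by
      intro k
      ext j
      simp [hSdef]
    have step1 : ∀ k : ℕ, g k ^ 2 * (∑ i ∈ S k, ∑ j ∈ (S k)ᶜ, Q i j)
        = ∑ i, ∑ j, (if r i ≤ k ∧ ¬ r j ≤ k then Q i j * g k ^ 2 else 0) := by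
      intro k
      rw [hcompl k]
      show g k ^ 2 * (∑ i ∈ Finset.univ.filter (fun i => r i ≤ k),
          ∑ j ∈ Finset.univ.filter (fun j => ¬ r j ≤ k), Q i j) = _
      rw [Finset.mul_sum, Finset.sum_filter]
      refine Finset.sum_congr rfl fun i _ => ?_
      simp only [ite_and]
      split_ifs with h1
      · rw [Finset.mul_sum, Finset.sum_filter]
        refine Finset.sum_congr rfl fun j _ => ?_
        split_ifs with h2 <;> ring
      · rw [Finset.sum_const_zero]
    calc ∑ k ∈ Finset.range (N - 1), g k ^ 2 * (∑ i ∈ S k, ∑ j ∈ (S k)ᶜ, Q i j)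
        = ∑ k ∈ Finset.range (N - 1), ∑ i, ∑ j,
            (if r i ≤ k ∧ ¬ r j ≤ k then Q i j * g k ^ 2 else 0) := by
          exact Finset.sum_congr rfl fun k _ => step1 k
      _ = ∑ i, ∑ j, ∑ k ∈ Finset.range (N - 1),
            (if r i ≤ k ∧ ¬ r j ≤ k then Q i j * g k ^ 2 else 0) := by
          rw [Finset.sum_comm]
          exact Finset.sum_congr rfl fun i _ => Finset.sum_comm
      _ = ∑ i, ∑ j, Q i j * T i j := by
          refine Finset.sum_congr rfl fun i _ => Finset.sum_congr rfl fun j _ => ?_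
          rw [hTdef, Finset.mul_sum]
          rw [Finset.sum_ite, Finset.sum_const_zero, add_zero]
          apply Finset.sum_congr _ (fun k _ => rfl)
          ext k
          simp only [Finset.mem_filter, Finset.mem_range, Finset.mem_Ico]
          have := hrle j
          omega
  -- (D) ∑∑ Q T ≤ ξQξ
  have hD : ∑ i, ∑ j, Q i j * T i j ≤ ξ ⬝ᵥ Q.mulVec ξ := by
    rw [hform ξ]
    set B : Fin N → Fin N → ℝ :=
      fun i j => if i < j then Q i j * (ξ i - ξ j) ^ 2 else 0 with hBdef
    have hrhs : ∑ i, ∑ j ∈ Finset.univ.filter (fun j => i < j), Q i j * (ξ i - ξ j) ^ 2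
        = ∑ i, ∑ j, B i j := by
      exact Finset.sum_congr rfl fun i _ => (Finset.sum_filter _ _)
    rw [hrhs]
    have hQsym' : ∀ i j, Q j i = Q i j := fun i j => by
      have := congrFun (congrFun hQsymm j) i
      simpa [Matrix.transpose_apply] using this.symm
    have key : ∀ i j : Fin N, Q i j * T i j + Q j i * T j i ≤ B i j + B j i := by
      intro i j
      rcases lt_trichotomy i j with hij | hij | hij
      · have hne : i ≠ j := ne_of_lt hij
        have hQ0 : 0 ≤ Q i j := hQnonneg i j hne
        have hBsum : B i j + B j i = Q i j * (ξ i - ξ j) ^ 2 := by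
          simp [hBdef, hij, not_lt_of_gt hij]
        rw [hBsum]
        rcases lt_trichotomy (r i) (r j) with hr | hr | hr
        · rw [hTzero j i hr.le]
          have := mul_le_mul_of_nonneg_left (hTbound i j hr) hQ0
          linarith
        · exact absurd (hrinj i j hr) hne
        · rw [hTzero i j hr.le]
          have h1 : T j i ≤ (ξ j - ξ i) ^ 2 := hTbound j i hr
          have h2 : (ξ j - ξ i) ^ 2 = (ξ i - ξ j) ^ 2 := by ring
          have := mul_le_mul_of_nonneg_left (h2 ▸ h1) hQ0
          rw [hQsym' i j]
          linarith
      · subst hij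
        rw [hTzero i i le_rfl]
        simp [hBdef]
      · have hne : i ≠ j := ne_of_gt hij
        have hQ0 : 0 ≤ Q i j := hQnonneg i j hne
        have hBsum : B i j + B j i = Q j i * (ξ j - ξ i) ^ 2 := by
          simp [hBdef, hij, not_lt_of_gt hij]
        rw [hBsum, hQsym' i j]
        have h2 : (ξ j - ξ i) ^ 2 = (ξ i - ξ j) ^ 2 := by ring
        rw [h2]
        rcases lt_trichotomy (r i) (r j) with hr | hr | hr
        · rw [hTzero j i hr.le]
          have := mul_le_mul_of_nonneg_left (hTbound i j hr) hQ0
          linarith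
        · exact absurd (hrinj i j hr) hne
        · rw [hTzero i j hr.le]
          have h1 : T j i ≤ (ξ j - ξ i) ^ 2 := hTbound j i hr
          have := mul_le_mul_of_nonneg_left (h2 ▸ h1) hQ0
          linarith
    have hAswap : ∑ i, ∑ j, Q j i * T j i = ∑ i, ∑ j, Q i j * T i j :=
      Finset.sum_comm
    have hBswap : ∑ i, ∑ j, B j i = ∑ i, ∑ j, B i j :=
      Finset.sum_comm
    have hsum : ∑ i, ∑ j, (Q i j * T i j + Q j i * T j i)
        ≤ ∑ i, ∑ j, (B i j + B j i) :=
      Finset.sum_le_sum fun i _ => Finset.sum_le_sum fun j _ => key i j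
    simp only [Finset.sum_add_distrib] at hsum
    linarith [hAswap, hBswap, hsum]
  -- assemble
  have hPG : πmin * c * G ≤ ξ ⬝ᵥ Q.mulVec ξ := by
    have h1 : πmin * c * G ≤ ∑ k ∈ Finset.range (N - 1),
        g k ^ 2 * (∑ i ∈ S k, ∑ j ∈ (S k)ᶜ, Q i j) := by
      rw [hGdef, Finset.mul_sum]
      refine Finset.sum_le_sum fun k hk => ?_
      have := hScut k hk
      have hgk : 0 ≤ g k ^ 2 := sq_nonneg _
      calc πmin * c * g k ^ 2 = g k ^ 2 * (πmin * c) := by ring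
        _ ≤ g k ^ 2 * (∑ i ∈ S k, ∑ j ∈ (S k)ᶜ, Q i j) :=
            mul_le_mul_of_nonneg_left this hgk
    calc πmin * c * G ≤ _ := h1
      _ = ∑ i, ∑ j, Q i j * T i j := hC
      _ ≤ ξ ⬝ᵥ Q.mulVec ξ := hD
  have hNne : (N : ℝ) ≠ 0 := Nat.cast_ne_zero.mpr hN.ne'
  have hfinal : (πmin * c / (N : ℝ) ^ 2) * ∑ i, (ξ i) ^ 2 ≤ πmin * c * G := by
    have hcoef : 0 ≤ πmin * c / (N : ℝ) ^ 2 := by positivity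
    calc (πmin * c / (N : ℝ) ^ 2) * ∑ i, (ξ i) ^ 2
        ≤ (πmin * c / (N : ℝ) ^ 2) * ((N : ℝ) * (M - m) ^ 2) :=
          mul_le_mul_of_nonneg_left hA hcoef
      _ ≤ (πmin * c / (N : ℝ) ^ 2) * ((N : ℝ) * ((N : ℝ) * G)) := by
          apply mul_le_mul_of_nonneg_left _ hcoef
          apply mul_le_mul_of_nonneg_left hB (Nat.cast_nonneg N)
      _ = πmin * c * G := by field_simp
  linarith
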